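/- Let n ≥ 3 and let λ_1,…,λ_n be reals with λ_1 > 0 > λ_2 ≥ ⋯ ≥ λ_n, λ_1 ∉ ℤ, and λ := λ_1+⋯+λ_n ∉ ℤ. Set K = max(0, ⌈λ/2⌉). With d defined as below for the generic tuple (λ_1,…,λ_n): for 0 ≤ k ≤ K one has d(k) = (−1)^k·C(k+n−2, n−2), and for every k > K one has |d(k)| < C(k+n−2, n−2). Equivalently, the definite multiplicity spaces in M_{λ_1} ⊗ ⋯ ⊗ M_{λ_n} are exactly those of level 0 through max(0, ⌈λ/2⌉), with even levels positive definite and odd levels negative definite. -/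

import Mathlib

open scoped Classical

/-- `fsig λ k` is the coefficient of `e^{λ-2k}` in the signature character of the
Verma module `M_λ` evaluated at `s = -1`. -/
noncomputable def fsig (lam : ℝ) (k : ℤ) : ℤ :=
  if k < 0 then 0
  else if lam < 0 then (-1) ^ k.toNat
  else if k ≤ ⌊lam⌋ then 1
  else (-1) ^ (k + ⌈lam⌉).toNat

/-- `convSig n lam k = Σ_{k₁+⋯+k_n = k} ∏_i f_{λ_i}(k_i)`, the coefficient of
`e^{λ−2k}` in the product of signature characters at `s = −1`. -/
noncomputable def convSig (n : ℕ) (lam : Fin n → ℝ) (k : ℕ) : ℤ :=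
  ∑ x ∈ Finset.Nat.antidiagonalTuple n k, ∏ i, fsig (lam i) (x i)

namespace Stmt15Aux

/-! ### The integer sequence `Wf r k = (-1)^k · Σ_{t=0}^k (-1)^t C(t+r,r)` and its properties -/

def Wf (r : ℕ) : ℕ → ℤ
  | 0 => 1
  | k+1 => ((k+1+r).choose r : ℤ) - Wf r k

lemma Wf_succ (r k : ℕ) : Wf r (k+1) = ((k+1+r).choose r : ℤ) - Wf r k := rfl

lemma Wf_zero_eq (k : ℕ) : Wf 0 k = if Even k then 1 else 0 := by
  induction k with
  | zero => simp [Wf]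
  | succ k ih =>
    rw [Wf_succ, ih, Nat.choose_zero_right]
    rcases Nat.even_or_odd k with h | h
    · simp [h, Nat.even_add_one]
    · simp [Nat.even_add_one, Nat.not_even_iff_odd.2 h]

lemma Wf_succ_sub (s k : ℕ) : Wf (s+1) (k+1) = Wf (s+1) k + Wf s (k+1) := by
  induction k with
  | zero =>
    have h1 : (1+(s+1)).choose (s+1) = s+2 := by
      have : 1+(s+1) = (s+1)+1 := by ring
      rw [this, Nat.choose_succ_self_right]
    have h2 : (1+s).choose s = s+1 := by
      have : 1+s = s+1 := by ring
      rw [this, Nat.choose_succ_self_right]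
    show ((1+(s+1)).choose (s+1) : ℤ) - Wf (s+1) 0 = Wf (s+1) 0 + (((1+s).choose s : ℤ) - Wf s 0)
    show ((1+(s+1)).choose (s+1) : ℤ) - 1 = 1 + (((1+s).choose s : ℤ) - 1)
    rw [h1, h2]; push_cast; ring
  | succ k ih =>
    have E1 : Wf (s+1) (k+1+1) = ((k+1+1+(s+1)).choose (s+1) : ℤ) - Wf (s+1) (k+1) :=
      Wf_succ _ _
    have E2 : Wf (s+1) (k+1) = ((k+1+(s+1)).choose (s+1) : ℤ) - Wf (s+1) k := Wf_succ _ _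
    have E3 : Wf s (k+1+1) = ((k+1+1+s).choose s : ℤ) - Wf s (k+1) := Wf_succ _ _
    have hp : ((k+1+1+(s+1)).choose (s+1) : ℤ)
        = ((k+1+(s+1)).choose (s+1) : ℤ) + ((k+1+1+s).choose s : ℤ) := by
      have h := Nat.choose_succ_succ (k+s+2) s
      have e1 : k+1+1+(s+1) = (k+s+2)+1 := by ring
      have e2 : k+1+(s+1) = k+s+2 := by ring
      have e3 : k+1+1+s = k+s+2 := by ring
      rw [e1, e2, e3, h]; push_cast; ring
    rw [E1, E3]
    linarith [ih, E2, hp]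

lemma Wf_nonneg (r k : ℕ) : 0 ≤ Wf r k := by
  induction r generalizing k with
  | zero => rw [Wf_zero_eq]; split <;> norm_num
  | succ s ih =>
    induction k with
    | zero => norm_num [Wf]
    | succ k ihk => rw [Wf_succ_sub]; have := ih (k+1); linarith

lemma Wf_pos (s k : ℕ) : 1 ≤ Wf (s+1) k := by
  induction k with
  | zero => norm_num [Wf]
  | succ k ihk => rw [Wf_succ_sub]; have := Wf_nonneg s (k+1); linarith

lemma Wf_pair (r k : ℕ) : 1 ≤ Wf r k + Wf r (k+1) := by
  cases r with
  | zero =>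
    rw [Wf_zero_eq, Wf_zero_eq]
    rcases Nat.even_or_odd k with h | h
    · rw [if_pos h]; split <;> norm_num
    · rw [if_neg (Nat.not_even_iff_odd.2 h), if_pos]
      · norm_num
      · simpa [Nat.even_add_one] using Nat.not_even_iff_odd.2 h
  | succ s => have := Wf_pos s k; have := Wf_nonneg (s+1) (k+1); linarith

lemma Wf_mono (s : ℕ) : Monotone (Wf (s+1)) := by
  apply monotone_nat_of_le_succ
  intro k
  rw [Wf_succ_sub]
  have := Wf_nonneg s (k+1); linarith

lemma Wf_two_step (s k : ℕ) : Wf (s+1) k + 1 ≤ Wf (s+1) (k+2) := by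
  rw [Wf_succ_sub, Wf_succ_sub]
  have := Wf_pair s (k+1); linarith

lemma Wf_choose (r k : ℕ) : ((k+1+r).choose r : ℤ) = Wf r (k+1) + Wf r k := by
  rw [Wf_succ]; ring

/-! ### `Vf r j = Σ_{t=0}^j (-1)^t C(t+r,r)` for `j : ℤ` (zero for `j < 0`) -/

def Vf (r : ℕ) (j : ℤ) : ℤ := if j < 0 then 0 else (-1)^j.toNat * Wf r j.toNat

lemma Vf_neg (r : ℕ) {j : ℤ} (h : j < 0) : Vf r j = 0 := if_pos h

lemma Vf_coe (r k : ℕ) : Vf r (k : ℤ) = (-1)^k * Wf r k := by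
  unfold Vf
  rw [if_neg (not_lt.2 (Int.natCast_nonneg k)), Int.toNat_natCast]

lemma Vf_zero (r : ℕ) : Vf r 0 = 1 := by
  have := Vf_coe r 0
  simpa [Wf] using this

lemma Vf_coe_sub (r k : ℕ) : Vf r (k : ℤ) - Vf r ((k : ℤ)-1) = (-1)^k * ((k+r).choose r : ℤ) := by
  cases k with
  | zero =>
    have : ((0:ℕ):ℤ) - 1 = -1 := by norm_num
    rw [this, Vf_neg r (show (-1:ℤ) < 0 by norm_num)]
    simp [Vf_zero]
  | succ k =>
    have h1 : ((k+1 : ℕ) : ℤ) - 1 = (k : ℕ) := by push_cast; ring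
    rw [h1, Vf_coe, Vf_coe, Wf_choose]
    rw [pow_succ]
    ring

lemma Vf_sum_ite (r : ℕ) (N : ℤ) (k : ℕ) :
    ∑ m ∈ Finset.range k, (if (m:ℤ) ≤ N then Vf r (m:ℤ) - Vf r ((m:ℤ)-1) else 0)
      = Vf r (min N ((k:ℤ)-1)) := by
  induction k with
  | zero =>
    rw [Finset.sum_range_zero, Vf_neg]
    exact lt_of_le_of_lt (min_le_right _ _) (by norm_num)
  | succ k ih =>
    rw [Finset.sum_range_succ, ih]
    by_cases h : (k:ℤ) ≤ N
    · rw [if_pos h]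
      have e1 : min N ((k:ℤ)-1) = (k:ℤ)-1 := min_eq_right (by omega)
      have e2 : min N (((k:ℕ)+1:ℤ)-1) = (k:ℤ) := by
        rw [min_eq_right (by omega)]; push_cast; ring
      push_cast
      rw [e1, e2]; ring
    · rw [if_neg h]
      have e1 : min N ((k:ℤ)-1) = N := min_eq_left (by omega)
      have e2 : min N (((k:ℕ)+1:ℤ)-1) = N := min_eq_left (by omega)
      push_cast
      rw [e1, e2]; ring

/-! ### Telescoping sums -/

lemma tele (h : ℕ → ℤ) (N : ℕ) :
    ∑ p ∈ Finset.range N, (h p - h (p+2)) = h 0 + h 1 - h N - h (N+1) := by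
  induction N with
  | zero => simp
  | succ N ih => rw [Finset.sum_range_succ, ih]; ring

lemma Asum (r a k : ℕ) (f1 : ℕ → ℤ)
    (hf1 : ∀ p : ℕ, f1 p = if p ≤ a then 1 else (-1:ℤ)^(p+a+1)) :
    ∑ p ∈ Finset.range (k+2), f1 p * (Vf r ((k:ℤ)+1-p) - Vf r ((k:ℤ)-1-p))
      = Vf r ((k:ℤ)+1) + Vf r (k:ℤ) - 2 * Vf r ((k:ℤ)-1-a) := by
  set h : ℕ → ℤ := fun p => Vf r ((k:ℤ)+1-p) with hh
  have hterm : ∀ p : ℕ, Vf r ((k:ℤ)+1-p) - Vf r ((k:ℤ)-1-p) = h p - h (p+2) := by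
    intro p
    simp only [hh]
    congr 2
    push_cast; ring
  have hbig : ∀ m : ℕ, k+2 ≤ m → h m = 0 := by
    intro m hm
    apply Vf_neg
    have : (k:ℤ) + 2 ≤ m := by exact_mod_cast hm
    omega
  have hf1' : ∀ p : ℕ, p ≤ a + 1 → f1 p = 1 := by
    intro p hp
    rw [hf1]
    rcases le_or_gt p a with h' | h'
    · rw [if_pos h']
    · have hpa : p = a + 1 := by omega
      rw [if_neg (by omega), hpa]
      have : a + 1 + a + 1 = 2 * (a + 1) := by ring
      rw [this, pow_mul]; norm_num
  have h0 : h 0 = Vf r ((k:ℤ)+1) := by simp [hh]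
  have h1 : h 1 = Vf r (k:ℤ) := by simp only [hh]; congr 1; push_cast; ring
  have ha2 : h (a+2) = Vf r ((k:ℤ)-1-a) := by simp only [hh]; congr 1; push_cast; ring
  rcases le_or_gt a k with hak | hak
  · have hkk : k + 2 = (a+2) + (k-a) := by omega
    rw [hkk, Finset.sum_range_add]
    have z1 : ∑ p ∈ Finset.range (a+2), f1 p * (Vf r ((k:ℤ)+1-p) - Vf r ((k:ℤ)-1-p))
        = h 0 + h 1 - h (a+2) - h (a+3) := by
      rw [← tele h (a+2)]
      apply Finset.sum_congr rfl
      intro p hp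
      rw [hf1' p (by simp at hp; omega), hterm p, one_mul]
    set g : ℕ → ℤ := fun q => (-1:ℤ)^q * h (a+2+q) with hg
    have z2 : ∑ q ∈ Finset.range (k-a),
        f1 (a+2+q) * (Vf r ((k:ℤ)+1-((a+2+q : ℕ):ℤ)) - Vf r ((k:ℤ)-1-((a+2+q : ℕ):ℤ)))
        = - h (a+2) + h (a+3) := by
      have e : ∀ q : ℕ, f1 (a+2+q) *
            (Vf r ((k:ℤ)+1-((a+2+q : ℕ):ℤ)) - Vf r ((k:ℤ)-1-((a+2+q : ℕ):ℤ)))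
          = -(g q - g (q+2)) := by
        intro q
        rw [hterm (a+2+q), hf1 (a+2+q), if_neg (by omega)]
        have e1 : a+2+q+a+1 = 2*(a+1) + (q+1) := by ring
        rw [e1, pow_add, pow_mul]
        simp only [hg]
        have e2 : a+2+(q+2) = a+2+q+2 := by ring
        rw [pow_add, e2]
        ring
      rw [Finset.sum_congr rfl (fun q _ => e q), Finset.sum_neg_distrib, tele g (k-a)]
      have hg0 : g 0 = h (a+2) := by simp [hg]
      have hg1 : g 1 = - h (a+3) := by simp only [hg, pow_one]; ring_nf
      have hgk : g (k-a) = 0 := by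
        simp only [hg]; rw [hbig (a+2+(k-a)) (by omega)]; ring
      have hgk1 : g (k-a+1) = 0 := by
        simp only [hg]; rw [hbig (a+2+(k-a+1)) (by omega)]; ring
      rw [hg0, hg1, hgk, hgk1]; ring
    rw [z1, z2, h0, h1, ha2]; ring
  · have hall : ∑ p ∈ Finset.range (k+2), f1 p * (Vf r ((k:ℤ)+1-p) - Vf r ((k:ℤ)-1-p))
        = h 0 + h 1 - h (k+2) - h (k+3) := by
      rw [← tele h (k+2)]
      apply Finset.sum_congr rfl
      intro p hp
      rw [hf1' p (by simp at hp; omega), hterm p, one_mul]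
    rw [hall, hbig (k+2) le_rfl, hbig (k+3) (by omega), h0, h1,
      Vf_neg r (show (k:ℤ)-1-a < 0 by omega)]
    ring

/-! ### Power series computation of `convSig` -/

lemma Gpow (m : ℕ) : (PowerSeries.mk fun j:ℕ => (-1:ℤ)^j)^(m+1)
    = PowerSeries.mk fun j => (-1:ℤ)^j * ((j+m).choose m : ℤ) := by
  induction m with
  | zero => rw [pow_one]; ext j; simp
  | succ m ih =>
    rw [pow_succ, ih]
    ext k
    rw [PowerSeries.coeff_mul, PowerSeries.coeff_mk,
      Finset.Nat.sum_antidiagonal_eq_sum_range_succ_mk]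
    have e : ∀ p ∈ Finset.range (k+1),
        (PowerSeries.coeff p) (PowerSeries.mk fun j => (-1:ℤ)^j * ((j+m).choose m : ℤ)) *
          (PowerSeries.coeff (k-p)) (PowerSeries.mk fun j:ℕ => (-1:ℤ)^j)
        = (-1:ℤ)^k * ((p+m).choose m : ℤ) := by
      intro p hp
      rw [Finset.mem_range] at hp
      rw [PowerSeries.coeff_mk, PowerSeries.coeff_mk]
      have : (-1:ℤ)^p * (-1:ℤ)^(k-p) = (-1)^k := by
        rw [← pow_add]
        congr 1
        omega
      rw [mul_comm ((-1:ℤ)^p) _, mul_assoc, this]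
      ring
    rw [Finset.sum_congr rfl e, ← Finset.mul_sum]
    have : ∑ p ∈ Finset.range (k+1), ((p+m).choose m : ℤ) = ((k+m+1).choose (m+1) : ℤ) := by
      rw [← Nat.cast_sum]
      norm_cast
      exact Nat.sum_range_add_choose k m
    rw [this]
    ring

lemma conv_coeff (n k : ℕ) (lam : Fin n → ℝ) :
    convSig n lam k
      = PowerSeries.coeff k (∏ i, PowerSeries.mk fun j:ℕ => fsig (lam i) (j:ℤ)) := by
  rw [PowerSeries.coeff_prod]
  unfold convSig
  rw [← Finset.piAntidiag_univ_fin_eq_antidiagonalTuple k n]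
  refine Finset.sum_nbij' (fun x => Finsupp.equivFunOnFinite.symm x) (fun l => ⇑l) ?_ ?_ ?_ ?_ ?_
  · intro x hx
    rw [Finset.mem_finsuppAntidiag]
    rw [Finset.mem_piAntidiag] at hx
    refine ⟨?_, Finset.subset_univ _⟩
    rw [← hx.1]
    exact Finset.sum_congr rfl fun i _ => rfl
  · intro l hl
    rw [Finset.mem_finsuppAntidiag] at hl
    rw [Finset.mem_piAntidiag]
    exact ⟨hl.1, fun i _ => Finset.mem_univ i⟩
  · intro x _; ext i; simp
  · intro l _; ext i; simp
  · intro x _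
    apply Finset.prod_congr rfl
    intro i _
    rw [PowerSeries.coeff_mk]
    norm_num [Finsupp.equivFunOnFinite]

/-! ### fsig evaluation helpers -/

lemma fsig_neg_lt (mu : ℝ) (hmu : mu < 0) {x : ℤ} (hx : 0 ≤ x) :
    fsig mu x = (-1)^x.toNat := by
  unfold fsig; rw [if_neg (not_lt.2 hx), if_pos hmu]

lemma fsig_pos_le (mu : ℝ) (hmu : ¬ mu < 0) {x : ℤ} (hx : 0 ≤ x) (h : x ≤ ⌊mu⌋) :
    fsig mu x = 1 := by
  unfold fsig; rw [if_neg (not_lt.2 hx), if_neg hmu, if_pos h]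

lemma fsig_pos_gt (mu : ℝ) (hmu : ¬ mu < 0) {x : ℤ} (hx : 0 ≤ x) (h : ¬ x ≤ ⌊mu⌋) :
    fsig mu x = (-1)^(x+⌈mu⌉).toNat := by
  unfold fsig; rw [if_neg (not_lt.2 hx), if_neg hmu, if_neg h]

/-! ### Sign helpers -/

lemma abs_neg_one_pow_mul (k : ℕ) (x : ℤ) : |(-1:ℤ)^k * x| = |x| := by
  rw [abs_mul, abs_pow]
  norm_num

lemma neg_one_pow_eq_of_even {x y : ℕ} (h : (x + y) % 2 = 0) : (-1:ℤ)^x = (-1)^y := by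
  have h2 : (-1:ℤ)^x * (-1)^y = 1 := by
    rw [← pow_add]
    exact Even.neg_one_pow (Nat.even_iff.2 h)
  have h3 : (-1:ℤ)^y * (-1)^y = 1 := by
    rw [← pow_add]
    exact Even.neg_one_pow ⟨y, rfl⟩
  calc (-1:ℤ)^x = (-1)^x * ((-1)^y * (-1)^y) := by rw [h3, mul_one]
    _ = ((-1)^x * (-1)^y) * (-1)^y := by ring
    _ = (-1)^y := by rw [h2, one_mul]

lemma neg_one_pow_eq_of_odd {x y : ℕ} (h : (x + y) % 2 = 1) : (-1:ℤ)^x = -(-1)^y := by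
  have : (-1:ℤ)^x = (-1)^(y+1) := neg_one_pow_eq_of_even (by omega)
  rw [this, pow_succ]
  ring

end Stmt15Aux

open Stmt15Aux

/-- Case 3 of Theorem 1.1: exactly one positive highest weight, `n ≥ 3`.
With `K = max(0, ⌈λ/2⌉)`, the definite multiplicity spaces are exactly levels `0` to `K`,
with `d(k) = (−1)^k·C(k+n−2,n−2)` there and `|d(k)| < C(k+n−2,n−2)` beyond. -/
theorem stmt_15 (n : ℕ) (hn : 3 ≤ n) (lam : Fin n → ℝ)
    (h1 : 0 < lam ⟨0, by omega⟩)
    (hneg : ∀ i : Fin n, 1 ≤ (i : ℕ) → lam i < 0)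
    (hmono : ∀ i j : Fin n, 1 ≤ (i : ℕ) → i ≤ j → lam j ≤ lam i)
    (hl1 : ∀ z : ℤ, lam ⟨0, by omega⟩ ≠ z)
    (hsumZ : ∀ z : ℤ, (∑ i, lam i) ≠ z)
    (d : ℕ → ℤ)
    (hd : ∀ k : ℕ, d k = convSig n lam k -
      ∑ m ∈ Finset.range k, d m * fsig ((∑ i, lam i) - 2 * m) ((k : ℤ) - m)) :
    ∀ k : ℕ,
      ((k : ℤ) ≤ max 0 ⌈(∑ i, lam i) / 2⌉ →
        d k = (-1) ^ k * ((k + n - 2).choose (n - 2) : ℤ)) ∧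
      (max 0 ⌈(∑ i, lam i) / 2⌉ < (k : ℤ) →
        |d k| < ((k + n - 2).choose (n - 2) : ℤ)) := by
  set i0 : Fin n := ⟨0, by omega⟩ with hi0
  set L : ℝ := ∑ i, lam i with hL
  set r : ℕ := n - 2 with hr
  set K : ℤ := max 0 ⌈L / 2⌉ with hK
  set b : ℤ := ⌊L⌋ with hb
  -- basic real facts
  have hl1' : 0 < lam i0 := h1
  have hLnotint : ∀ z : ℤ, L ≠ z := hsumZ
  have hfl_pos : 0 ≤ ⌊lam i0⌋ := Int.le_floor.2 (by exact_mod_cast h1.le)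
  set a : ℕ := ⌊lam i0⌋.toNat with ha
  have haz : (a : ℤ) = ⌊lam i0⌋ := Int.toNat_of_nonneg hfl_pos
  have hceil1 : ⌈lam i0⌉ = (a : ℤ) + 1 := by
    have h1' : ⌈lam i0⌉ ≤ ⌊lam i0⌋ + 1 := Int.ceil_le_floor_add_one _
    have h2' : ⌊lam i0⌋ < ⌈lam i0⌉ := by
      rcases lt_or_ge ⌊lam i0⌋ ⌈lam i0⌉ with h | h
      · exact h
      · exfalso
        apply hl1 ⌊lam i0⌋
        have h3 : (⌈lam i0⌉ : ℝ) ≤ ⌊lam i0⌋ := by exact_mod_cast h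
        have h4 := Int.floor_le (lam i0)
        have h5 := Int.le_ceil (lam i0)
        linarith [le_antisymm (le_trans h5 h3) h4 ]
    omega
  have hLlt : L < lam i0 := by
    have : ∑ i ∈ Finset.univ.erase i0, lam i < 0 := by
      have hne : (Finset.univ.erase i0).Nonempty := by
        have h2n : (⟨1, by omega⟩ : Fin n) ∈ Finset.univ.erase i0 := by
          rw [Finset.mem_erase]
          refine ⟨?_, Finset.mem_univ _⟩
          intro hc
          rw [hi0] at hc
          have := congrArg Fin.val hc
          simp at this
        exact ⟨_, h2n⟩
      apply Finset.sum_neg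
      · intro i hi
        rw [Finset.mem_erase] at hi
        apply hneg
        have : (i : ℕ) ≠ 0 := by
          intro hc
          apply hi.1
          rw [hi0]
          exact Fin.ext hc
        omega
      · exact hne
    have := Finset.add_sum_erase Finset.univ lam (Finset.mem_univ i0)
    rw [hL, ← this]
    linarith
  have hba : b ≤ (a : ℤ) := by
    rw [hb, haz]
    exact Int.floor_le_floor hLlt.le
  have hbL : (b : ℝ) < L ∧ L < (b : ℝ) + 1 := by
    constructor
    · rcases lt_or_ge (b : ℝ) L with h | h
      · exact h
      · exfalso
        apply hLnotint b
        have := Int.floor_le L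
        rw [← hb] at this
        linarith [le_antisymm h this]
    · exact_mod_cast Int.lt_floor_add_one L
  have hK0 : 0 ≤ K := le_max_left _ _
  have hKneg : b < 0 → K = 0 := by
    intro hbneg
    rw [hK, max_eq_left]
    rw [Int.ceil_le]
    have : (b:ℝ) + 1 ≤ 0 := by exact_mod_cast (by omega : b + 1 ≤ 0)
    push_cast
    linarith [hbL.2]
  have hKb : 0 ≤ b → b + 1 ≤ 2*K ∧ 2*K ≤ b + 2 := by
    intro hbpos
    have hLpos : 0 < L := by
      have : (0:ℝ) ≤ b := by exact_mod_cast hbpos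
      linarith [hbL.1]
    have hKc : K = ⌈L/2⌉ := by
      rw [hK, max_eq_right]
      have : (0:ℝ) < L/2 := by linarith
      exact_mod_cast Int.ceil_pos.2 this |>.le
    constructor
    · -- b + 1 ≤ 2K : since 2⌈L/2⌉ ≥ L > b
      have h1' : L ≤ (2*K : ℤ) := by
        rw [hKc]
        push_cast
        have := Int.le_ceil (L/2)
        linarith
      have : (b:ℝ) < (2*K:ℤ) := lt_of_lt_of_le hbL.1 h1'
      exact_mod_cast (by exact_mod_cast this : (b:ℤ) < 2*K)
    · -- 2K ≤ b + 2 : since 2⌈L/2⌉ < L + 2 ≤ b + 3, and < b+3 int means ≤ b+2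
      have h1' : ((2*K : ℤ) : ℝ) < L + 2 := by
        rw [hKc]
        push_cast
        have := Int.ceil_lt_add_one (L/2)
        linarith
      have h2' : ((2*K : ℤ) : ℝ) < (b:ℝ) + 3 := by linarith [hbL.2]
      have : (2*K : ℤ) < b + 3 := by exact_mod_cast h2'
      omega
  -- fsig of the positive weight
  have hf1 : ∀ p : ℕ, fsig (lam i0) (p:ℤ) = if p ≤ a then 1 else (-1:ℤ)^(p+a+1) := by
    intro p
    unfold fsig
    rw [if_neg (not_lt.2 (Int.natCast_nonneg p)), if_neg (not_lt.2 hl1'.le), ← haz, hceil1]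
    by_cases hpa : p ≤ a
    · rw [if_pos (by exact_mod_cast hpa), if_pos hpa]
    · rw [if_neg (by exact_mod_cast hpa), if_neg hpa]
      congr 1 <;> omega
  -- fsig of negative weights
  have hfneg : ∀ (mu : ℝ), mu < 0 → ∀ p : ℕ, fsig mu (p:ℤ) = (-1:ℤ)^p := by
    intro mu hmu p
    unfold fsig
    rw [if_neg (not_lt.2 (Int.natCast_nonneg p)), if_pos hmu, Int.toNat_natCast]
  -- the product of the negative-weight series
  have prod_eq : (∏ i, PowerSeries.mk fun j:ℕ => fsig (lam i) (j:ℤ))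
      = (PowerSeries.mk fun j:ℕ => fsig (lam i0) (j:ℤ)) *
        (PowerSeries.mk fun j:ℕ => (-1:ℤ)^j)^(n-1) := by
    rw [← Finset.mul_prod_erase Finset.univ _ (Finset.mem_univ i0)]
    congr 1
    have : ∀ i ∈ Finset.univ.erase i0, (PowerSeries.mk fun j:ℕ => fsig (lam i) (j:ℤ))
        = PowerSeries.mk fun j:ℕ => (-1:ℤ)^j := by
      intro i hi
      rw [Finset.mem_erase] at hi
      have hiv : 1 ≤ (i : ℕ) := by
        rcases Nat.eq_zero_or_pos (i : ℕ) with h | h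
        · exact absurd (Fin.ext (by rw [hi0]; exact h) : i = i0) hi.1
        · exact h
      ext j
      rw [PowerSeries.coeff_mk, PowerSeries.coeff_mk, hfneg _ (hneg i hiv) j]
    rw [Finset.prod_congr rfl this, Finset.prod_const, Finset.card_erase_of_mem (Finset.mem_univ i0)]
    congr 1
    simp
  -- closed form of the convolution coefficients
  have conv_sum : ∀ k : ℕ, convSig n lam k
      = ∑ p ∈ Finset.range (k+1),
          fsig (lam i0) (p:ℤ) * (Vf r ((k:ℤ)-p) - Vf r ((k:ℤ)-p-1)) := by
    intro k
    rw [conv_coeff, prod_eq]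
    have hn1 : n - 1 = r + 1 := by omega
    rw [hn1, Gpow r, PowerSeries.coeff_mul, Finset.Nat.sum_antidiagonal_eq_sum_range_succ_mk]
    apply Finset.sum_congr rfl
    intro p hp
    rw [Finset.mem_range] at hp
    rw [PowerSeries.coeff_mk, PowerSeries.coeff_mk]
    congr 1
    have hc : ((k - p : ℕ) : ℤ) = (k:ℤ) - p := by omega
    have := Vf_coe_sub r (k - p)
    rw [hc] at this
    rw [← this]
  -- the key formula for conv (k+1) + conv k
  have hA : ∀ k : ℕ, convSig n lam (k+1) + convSig n lam k
      = Vf r ((k:ℤ)+1) + Vf r (k:ℤ) - 2 * Vf r ((k:ℤ)-1-a) := by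
    intro k
    rw [conv_sum (k+1), conv_sum k]
    have hpad : ∑ p ∈ Finset.range (k+1),
        fsig (lam i0) (p:ℤ) * (Vf r ((k:ℤ)-p) - Vf r ((k:ℤ)-p-1))
        = ∑ p ∈ Finset.range (k+2),
        fsig (lam i0) (p:ℤ) * (Vf r ((k:ℤ)-p) - Vf r ((k:ℤ)-p-1)) := by
      rw [Finset.sum_range_succ (fun p => fsig (lam i0) (p:ℤ) * (Vf r ((k:ℤ)-p) - Vf r ((k:ℤ)-p-1))) (k+1)]
      rw [Vf_neg r (show (k:ℤ)-(k+1:ℕ) < 0 by push_cast; omega),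
        Vf_neg r (show (k:ℤ)-(k+1:ℕ)-1 < 0 by push_cast; omega)]
      ring
    rw [hpad, ← Finset.sum_add_distrib]
    have : ∀ p ∈ Finset.range (k+2),
        fsig (lam i0) (p:ℤ) * (Vf r (((k+1:ℕ):ℤ)-p) - Vf r (((k+1:ℕ):ℤ)-p-1)) +
        fsig (lam i0) (p:ℤ) * (Vf r ((k:ℤ)-p) - Vf r ((k:ℤ)-p-1))
        = fsig (lam i0) (p:ℤ) * (Vf r ((k:ℤ)+1-p) - Vf r ((k:ℤ)-1-p)) := by
      intro p _
      have e1 : ((k+1:ℕ):ℤ)-p = (k:ℤ)+1-p := by push_cast; ring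
      have e2 : ((k+1:ℕ):ℤ)-p-1 = (k:ℤ)-p := by push_cast; ring
      have e3 : (k:ℤ)-p-1 = (k:ℤ)-1-p := by ring
      rw [e2, e1, e3]
      ring
    rw [Finset.sum_congr rfl this]
    exact Asum r a k _ hf1
  -- fsig at 0 is 1
  have hf0 : ∀ m : ℕ, fsig (L - 2*m) 0 = 1 := by
    intro m
    have hne : L - 2*m ≠ 0 := by
      intro hc
      exact hLnotint (2*m) (by push_cast; linarith)
    rcases lt_or_gt_of_ne hne with h | h
    · rw [fsig_neg_lt _ h le_rfl]; norm_num
    · rw [fsig_pos_le _ (not_lt.2 h.le) le_rfl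
        (Int.le_floor.2 (by exact_mod_cast h.le))]
  -- floor of L - 2m
  have hfloor2 : ∀ m : ℕ, ⌊L - 2*(m:ℝ)⌋ = b - 2*m := by
    intro m
    have : L - 2*(m:ℝ) = L - ((2*m : ℤ) : ℝ) := by push_cast; ring
    rw [this, Int.floor_sub_intCast, ← hb]
  -- positivity of L - 2m vs K
  have hposK : ∀ m : ℕ, (0 < L - 2*(m:ℝ)) ↔ (m:ℤ) < K := by
    intro m
    constructor
    · intro h
      have hL2 : (m:ℝ) < L/2 := by linarith
      have h1' : (m:ℤ) < ⌈L/2⌉ := by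
        by_contra hc
        push_neg at hc
        have : (⌈L/2⌉ : ℝ) ≤ (m:ℝ) := by exact_mod_cast hc
        linarith [Int.le_ceil (L/2)]
      calc (m:ℤ) < ⌈L/2⌉ := h1'
        _ ≤ K := le_max_right _ _
    · intro h
      have hKpos : 0 < K := lt_of_le_of_lt (Int.natCast_nonneg m) h
      have hKc : K = ⌈L/2⌉ := by
        rcases max_cases 0 ⌈L/2⌉ with ⟨h1', _⟩ | ⟨h1', _⟩
        · rw [hK] at hKpos; omega
        · rw [hK, h1']
      rw [hKc] at h
      have : (m:ℝ) ≤ (⌈L/2⌉ : ℝ) - 1 := by exact_mod_cast (by omega : (m:ℤ) ≤ ⌈L/2⌉ - 1)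
      have h2' := Int.ceil_lt_add_one (L/2)
      have : (m:ℝ) < L/2 := by linarith
      linarith
  -- pair identity for fsig of L-2m
  have hpair : ∀ (m kk : ℕ), (m:ℤ) < kk →
      fsig (L - 2*m) ((kk:ℤ)-m) + fsig (L - 2*m) ((kk:ℤ)-m-1)
        = if ((m:ℤ) < K ∧ (m:ℤ) ≤ b+1-kk) then 2 else 0 := by
    intro m kk hmk
    have hjpos : 1 ≤ (kk:ℤ) - m := by omega
    have hne : ∀ z : ℤ, L - 2*(m:ℝ) ≠ z := by
      intro z hc
      exact hLnotint (z + 2*m) (by push_cast; push_cast at hc; linarith)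
    have hne0 : L - 2*(m:ℝ) ≠ 0 := by simpa using hne 0
    rcases lt_or_gt_of_ne hne0 with hneg' | hpos'
    · -- L - 2m < 0 : both terms alternate and cancel; condition is false
      rw [if_neg (by
        intro hc
        exact absurd ((hposK m).2 hc.1) (not_lt.2 hneg'.le))]
      rw [fsig_neg_lt _ hneg' (by omega : (0:ℤ) ≤ (kk:ℤ)-m),
        fsig_neg_lt _ hneg' (by omega : (0:ℤ) ≤ (kk:ℤ)-m-1)]
      have e1 : ((kk:ℤ)-m).toNat = ((kk:ℤ)-m-1).toNat + 1 := by omega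
      rw [e1, pow_succ]
      ring
    · -- L - 2m > 0
      have hpos'' : 0 < L - 2*(m:ℝ) := hpos'
      have hcond1 : (m:ℤ) < K := (hposK m).1 hpos''
      have hnl : ¬ (L - 2*(m:ℝ) < 0) := not_lt.2 hpos''.le
      have hfl : ⌊L - 2*(m:ℝ)⌋ = b - 2*m := hfloor2 m
      have hflnn : 0 ≤ b - 2*(m:ℤ) := by
        rw [← hfl]
        exact Int.le_floor.2 (by exact_mod_cast hpos''.le)
      have hcl : ⌈L - 2*(m:ℝ)⌉ = b - 2*m + 1 := by
        have h1' := Int.ceil_le_floor_add_one (L - 2*(m:ℝ))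
        have h2' : ⌊L - 2*(m:ℝ)⌋ < ⌈L - 2*(m:ℝ)⌉ := by
          rcases lt_or_ge ⌊L - 2*(m:ℝ)⌋ ⌈L - 2*(m:ℝ)⌉ with h | h
          · exact h
          · exfalso
            apply hne ⌊L - 2*(m:ℝ)⌋
            have h3 : (⌈L - 2*(m:ℝ)⌉ : ℝ) ≤ ⌊L - 2*(m:ℝ)⌋ := by exact_mod_cast h
            have h4 := Int.floor_le (L - 2*(m:ℝ))
            have h5 := Int.le_ceil (L - 2*(m:ℝ))
            linarith [le_antisymm (le_trans h5 h3) h4]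
        omega
      have hsplit : (kk:ℤ)-m ≤ b-2*m ∨ (kk:ℤ)-m = b-2*m+1 ∨ b-2*m+2 ≤ (kk:ℤ)-m := by omega
      rcases hsplit with hcase | hcase | hcase
      · rw [fsig_pos_le _ hnl (by omega) (by rw [hfl]; omega),
          fsig_pos_le _ hnl (by omega) (by rw [hfl]; omega),
          if_pos (by omega : (m:ℤ) < K ∧ (m:ℤ) ≤ b+1-kk)]
        norm_num
      · rw [fsig_pos_gt _ hnl (by omega) (by rw [hfl]; omega),
          fsig_pos_le _ hnl (by omega) (by rw [hfl]; omega),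
          if_pos (by omega : (m:ℤ) < K ∧ (m:ℤ) ≤ b+1-kk)]
        rw [hcl]
        have e1 : ((kk:ℤ)-m + (b-2*m+1)).toNat = 2*((b-2*(m:ℤ)).toNat + 1) := by omega
        rw [e1, pow_mul]
        norm_num
      · rw [fsig_pos_gt _ hnl (by omega) (by rw [hfl]; omega),
          fsig_pos_gt _ hnl (by omega) (by rw [hfl]; omega),
          if_neg (by omega : ¬ ((m:ℤ) < K ∧ (m:ℤ) ≤ b+1-kk))]
        rw [hcl]
        have e1 : ((kk:ℤ)-m + (b-2*m+1)).toNat = ((kk:ℤ)-m-1 + (b-2*m+1)).toNat + 1 := by omega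
        rw [e1, pow_succ]
        ring
  -- the simplified recursion
  have hrec : ∀ k : ℕ, d (k+1) = (convSig n lam (k+1) + convSig n lam k)
      - 2 * ∑ m ∈ Finset.range (k+1),
          (if ((m:ℤ) < K ∧ (m:ℤ) ≤ b+1-((k:ℤ)+1)) then d m else 0) := by
    intro k
    have h1' := hd (k+1)
    have h2' := hd k
    have e0 : convSig n lam k = ∑ m ∈ Finset.range (k+1), d m * fsig (L - 2*m) ((k:ℤ)-m) := by
      rw [Finset.sum_range_succ, sub_self, hf0 k, mul_one]
      rw [hL] at h2' ⊢
      linarith [h2']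
    have e1 : ∑ m ∈ Finset.range (k+1),
        (d m * fsig (L - 2*m) (((k+1:ℕ):ℤ)-m) + d m * fsig (L - 2*m) ((k:ℤ)-m))
        = ∑ m ∈ Finset.range (k+1), 2 * (if ((m:ℤ) < K ∧ (m:ℤ) ≤ b+1-((k:ℤ)+1)) then d m else 0) := by
      apply Finset.sum_congr rfl
      intro m hm
      rw [Finset.mem_range] at hm
      have hp := hpair m (k+1) (by exact_mod_cast by omega)
      have ej : ((k+1:ℕ):ℤ) - m - 1 = (k:ℤ) - m := by push_cast; ring
      have ej2 : b + 1 - ((k+1:ℕ):ℤ) = b + 1 - ((k:ℤ)+1) := by push_cast; ring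
      rw [ej, ej2] at hp
      rw [← mul_add, hp]
      split_ifs with hcond
      · ring
      · ring
    have h1'' : d (k+1) = convSig n lam (k+1)
        - ∑ m ∈ Finset.range (k+1), d m * fsig (L - 2*m) (((k+1:ℕ):ℤ)-m) := by
      rw [hL] at h1' ⊢
      exact h1'
    rw [h1'', e0]
    rw [Finset.sum_add_distrib] at e1
    rw [Finset.mul_sum]
    linarith [e1]
  -- reduction of the closed form at indices ≤ K
  have hred : ∀ m : ℕ, (m:ℤ) ≤ K →
      Vf r (m:ℤ) + Vf r ((m:ℤ)-1) - 2*Vf r ((m:ℤ)-2-(a:ℤ))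
        - 2*Vf r (min (min (K-1) (b+1-(m:ℤ))) ((m:ℤ)-1))
      = Vf r (m:ℤ) - Vf r ((m:ℤ)-1) := by
    intro m hm
    rcases Nat.eq_zero_or_pos m with h0 | h0
    · subst h0
      rw [Vf_neg r (show ((0:ℕ):ℤ)-1 < 0 by norm_num),
        Vf_neg r (show ((0:ℕ):ℤ)-2-(a:ℤ) < 0 by omega),
        Vf_neg r (lt_of_le_of_lt (min_le_right _ _) (show ((0:ℕ):ℤ)-1 < 0 by norm_num))]
      ring
    · have hbnn : 0 ≤ b := by
        by_contra hc
        have := hKneg (by omega)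
        omega
      obtain ⟨hK1, hK2⟩ := hKb hbnn
      have hmin : min (min (K-1) (b+1-(m:ℤ))) ((m:ℤ)-1) = (m:ℤ)-1 := by
        rw [min_eq_right]
        exact le_min (by omega) (by omega)
      rw [hmin, Vf_neg r (show (m:ℤ)-2-(a:ℤ) < 0 by omega)]
      ring
  -- the closed form for d
  have C1 : ∀ k : ℕ, d k = Vf r (k:ℤ) + Vf r ((k:ℤ)-1) - 2*Vf r ((k:ℤ)-2-(a:ℤ))
      - 2*Vf r (min (min (K-1) (b+1-(k:ℤ))) ((k:ℤ)-1)) := by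
    intro k
    induction k using Nat.strong_induction_on with
    | _ k IH =>
      cases k with
      | zero =>
        have h0 := hd 0
        rw [Finset.sum_range_zero] at h0
        have hc0 : convSig n lam 0 = 1 := by
          rw [conv_sum 0, Finset.sum_range_one, hf1 0, if_pos (Nat.zero_le a)]
          rw [Vf_neg r (show ((0:ℕ):ℤ)-(0:ℕ)-1 < 0 by norm_num)]
          norm_num [Vf_zero]
        have R1 : Vf r (((0:ℕ):ℤ)-1) = 0 := Vf_neg r (by norm_num)
        have R2 : Vf r (((0:ℕ):ℤ)-2-(a:ℤ)) = 0 := Vf_neg r (by omega)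
        have R3 : Vf r (min (min (K-1) (b+1-((0:ℕ):ℤ))) (((0:ℕ):ℤ)-1)) = 0 :=
          Vf_neg r (lt_of_le_of_lt (min_le_right _ _) (by norm_num))
        rw [h0, hc0, R1, R2, R3, Nat.cast_zero, Vf_zero]
        ring
      | succ k =>
        rw [hrec k, hA k]
        have hsum : ∑ m ∈ Finset.range (k+1),
            (if ((m:ℤ) < K ∧ (m:ℤ) ≤ b+1-((k:ℤ)+1)) then d m else 0)
            = Vf r (min (min (K-1) (b+1-((k:ℤ)+1))) (((k+1:ℕ):ℤ)-1)) := by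
          have hterm : ∀ m ∈ Finset.range (k+1),
              (if ((m:ℤ) < K ∧ (m:ℤ) ≤ b+1-((k:ℤ)+1)) then d m else 0)
              = (if (m:ℤ) ≤ min (K-1) (b+1-((k:ℤ)+1)) then Vf r (m:ℤ) - Vf r ((m:ℤ)-1) else 0) := by
            intro m hm
            rw [Finset.mem_range] at hm
            by_cases hcond : ((m:ℤ) < K ∧ (m:ℤ) ≤ b+1-((k:ℤ)+1))
            · rw [if_pos hcond, if_pos (le_min (by omega) (by omega))]
              rw [IH m (by omega), hred m (by omega)]
            · rw [if_neg hcond, if_neg (by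
                intro hc
                exact hcond ⟨by have := (le_min_iff.1 hc).1; omega, (le_min_iff.1 hc).2⟩)]
          rw [Finset.sum_congr rfl hterm, Vf_sum_ite r _ (k+1)]
        rw [hsum]
        have e : ((k+1:ℕ):ℤ) = (k:ℤ)+1 := by push_cast; ring
        rw [e]
        have e2 : (k:ℤ)+1-1 = (k:ℤ) := by ring
        have e3 : (k:ℤ)+1-2-(a:ℤ) = (k:ℤ)-1-(a:ℤ) := by ring
        rw [e2, e3]
  -- auxiliary facts about Wf at level r
  have hrpos : 1 ≤ r := by omega
  have hr1 : r = (r-1)+1 := by omega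
  have hWpos : ∀ t : ℕ, 1 ≤ Wf r t := by
    intro t; have := Wf_pos (r-1) t; rwa [← hr1] at this
  have hWnn : ∀ t : ℕ, 0 ≤ Wf r t := fun t => Wf_nonneg r t
  have hWmono : ∀ s t : ℕ, s ≤ t → Wf r s ≤ Wf r t := by
    intro s t hst; have := Wf_mono (r-1) hst; rwa [← hr1] at this
  have hW2 : ∀ t : ℕ, Wf r t + 1 ≤ Wf r (t+2) := by
    intro t; have := Wf_two_step (r-1) t; rwa [← hr1] at this
  -- final conclusion
  intro k
  constructor
  · -- k ≤ K : definite, alternating binomial values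
    intro hk
    rw [C1 k, hred k hk, Vf_coe_sub r k]
    have ec : k + n - 2 = k + r := by omega
    rw [ec]
  · -- K < k : indefinite
    intro hk
    have hk1 : 1 ≤ k := by
      by_contra hc
      have : k = 0 := by omega
      subst this
      simp at hk
      omega
    obtain ⟨k', rfl⟩ : ∃ k', k = k'+1 := ⟨k-1, by omega⟩
    have hC : (((k'+1) + n - 2).choose (n-2) : ℤ) = Wf r (k'+1) + Wf r k' := by
      have ec : (k'+1) + n - 2 = k'+1+r := by omega
      rw [ec, ← hr]
      exact Wf_choose r k'
    have h2k : b + 3 ≤ 2*((k'+1:ℕ):ℤ) := by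
      push_cast
      rcases lt_or_ge b 0 with hb0 | hb0
      · omega
      · have := hKb hb0
        push_cast at hk
        omega
    have hmin : min (min (K-1) (b+1-((k'+1:ℕ):ℤ))) (((k'+1:ℕ):ℤ)-1) = b+1-((k'+1:ℕ):ℤ) := by
      have hin : b+1-((k'+1:ℕ):ℤ) ≤ K-1 := by
        rcases lt_or_ge b 0 with hb0 | hb0
        · have := hKneg hb0
          push_cast
          omega
        · have := hKb hb0
          push_cast at hk ⊢
          omega
      rw [min_eq_right hin, min_eq_left (by omega)]
    have ecast : ((k'+1:ℕ):ℤ) - 1 = (k':ℕ) := by push_cast; ring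
    rw [C1 (k'+1), hmin, ecast, Vf_coe r (k'+1), Vf_coe r k', hC]
    rcases lt_or_ge (b+1-((k'+1:ℕ):ℤ)) 0 with hj | hj
    · rcases lt_or_ge (((k'+1:ℕ):ℤ)-2-(a:ℤ)) 0 with hi | hi
      · -- both tails vanish
        rw [Vf_neg r hi, Vf_neg r hj]
        have e : (-1:ℤ)^(k'+1) * Wf r (k'+1) + (-1)^k' * Wf r k' - 2*0 - 2*0
            = (-1:ℤ)^(k'+1) * (Wf r (k'+1) - Wf r k') := by
          rw [pow_succ]; ring
        rw [e, abs_neg_one_pow_mul,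
          abs_of_nonneg (by linarith [hWmono k' (k'+1) (by omega)])]
        linarith [hWpos k']
      · -- i-tail present
        rw [Vf_neg r hj]
        set iN : ℕ := (((k'+1:ℕ):ℤ)-2-(a:ℤ)).toNat with hiN
        have hiNc : (iN:ℤ) = ((k'+1:ℕ):ℤ)-2-(a:ℤ) := Int.toNat_of_nonneg hi
        have hiNk : iN + a + 2 = k'+1 := by omega
        rw [show ((k'+1:ℕ):ℤ)-2-(a:ℤ) = (iN:ℤ) from hiNc.symm, Vf_coe r iN]
        rcases Nat.even_or_odd (iN + (k'+1)) with hpar | hpar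
        · -- minus sign
          have hs : (-1:ℤ)^iN = (-1)^(k'+1) := neg_one_pow_eq_of_even (Nat.even_iff.1 hpar)
          have e : (-1:ℤ)^(k'+1) * Wf r (k'+1) + (-1)^k' * Wf r k' - 2*((-1:ℤ)^iN * Wf r iN) - 2*0
              = (-1:ℤ)^(k'+1) * (Wf r (k'+1) - Wf r k' - 2 * Wf r iN) := by
            rw [hs, pow_succ]; ring
          rw [e, abs_neg_one_pow_mul, abs_lt]
          have hk'1 : 1 ≤ k' := by omega
          have hle : Wf r iN ≤ Wf r (k'-1) := hWmono _ _ (by omega)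
          have hst : Wf r (k'-1) + 1 ≤ Wf r (k'+1) := by
            have := hW2 (k'-1)
            have e2 : k'-1+2 = k'+1 := by omega
            rwa [e2] at this
          constructor
          · linarith [hWpos k', hWnn iN]
          · linarith [hWpos k', hWnn iN]
        · -- plus sign
          have hs : (-1:ℤ)^iN = -(-1)^(k'+1) := neg_one_pow_eq_of_odd (Nat.odd_iff.1 hpar)
          have haodd : 1 ≤ a := by
            rcases Nat.eq_zero_or_pos a with h0 | h0
            · exfalso
              have : iN + (k'+1) = 2*(k'+1) - 2 := by omega
              rw [Nat.odd_iff, this] at hpar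
              omega
            · exact h0
          have hiN3 : iN + 3 ≤ k'+1 := by omega
          have hk'2 : 2 ≤ k' := by omega
          have e : (-1:ℤ)^(k'+1) * Wf r (k'+1) + (-1)^k' * Wf r k' - 2*((-1:ℤ)^iN * Wf r iN) - 2*0
              = (-1:ℤ)^(k'+1) * (Wf r (k'+1) - Wf r k' + 2 * Wf r iN) := by
            rw [hs, pow_succ]; ring
          rw [e, abs_neg_one_pow_mul, abs_lt]
          have hle : Wf r iN ≤ Wf r (k'-2) := hWmono _ _ (by omega)
          have hst : Wf r (k'-2) + 1 ≤ Wf r k' := by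
            have := hW2 (k'-2)
            have e2 : k'-2+2 = k' := by omega
            rwa [e2] at this
          constructor
          · linarith [hWpos (k'+1), hWnn iN, hWmono k' (k'+1) (by omega)]
          · linarith [hWnn iN]
    · -- j-tail present (then i-tail vanishes)
      have hi : (((k'+1:ℕ):ℤ)-2-(a:ℤ)) < 0 := by omega
      rw [Vf_neg r hi]
      set jN : ℕ := (b+1-((k'+1:ℕ):ℤ)).toNat with hjN
      have hjNc : (jN:ℤ) = b+1-((k'+1:ℕ):ℤ) := Int.toNat_of_nonneg hj
      have hjNk : (jN:ℤ) ≤ (k':ℤ)-1 := by omega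
      rw [show b+1-((k'+1:ℕ):ℤ) = (jN:ℤ) from hjNc.symm, Vf_coe r jN]
      rcases Nat.even_or_odd (jN + (k'+1)) with hpar | hpar
      · -- minus sign
        have hs : (-1:ℤ)^jN = (-1)^(k'+1) := neg_one_pow_eq_of_even (Nat.even_iff.1 hpar)
        have e : (-1:ℤ)^(k'+1) * Wf r (k'+1) + (-1)^k' * Wf r k' - 2*0 - 2*((-1:ℤ)^jN * Wf r jN)
            = (-1:ℤ)^(k'+1) * (Wf r (k'+1) - Wf r k' - 2 * Wf r jN) := by
          rw [hs, pow_succ]; ring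
        rw [e, abs_neg_one_pow_mul, abs_lt]
        have hk'1 : 1 ≤ k' := by omega
        have hle : Wf r jN ≤ Wf r (k'-1) := hWmono _ _ (by omega)
        have hst : Wf r (k'-1) + 1 ≤ Wf r (k'+1) := by
          have := hW2 (k'-1)
          have e2 : k'-1+2 = k'+1 := by omega
          rwa [e2] at this
        constructor
        · linarith [hWpos k', hWnn jN]
        · linarith [hWpos k', hWnn jN]
      · -- plus sign
        have hs : (-1:ℤ)^jN = -(-1)^(k'+1) := neg_one_pow_eq_of_odd (Nat.odd_iff.1 hpar)
        have hjN3 : (jN:ℤ) + 3 ≤ ((k'+1:ℕ):ℤ) := by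
          have hmod := Nat.odd_iff.1 hpar
          omega
        have hk'2 : 2 ≤ k' := by omega
        have e : (-1:ℤ)^(k'+1) * Wf r (k'+1) + (-1)^k' * Wf r k' - 2*0 - 2*((-1:ℤ)^jN * Wf r jN)
            = (-1:ℤ)^(k'+1) * (Wf r (k'+1) - Wf r k' + 2 * Wf r jN) := by
          rw [hs, pow_succ]; ring
        rw [e, abs_neg_one_pow_mul, abs_lt]
        have hle : Wf r jN ≤ Wf r (k'-2) := hWmono _ _ (by omega)
        have hst : Wf r (k'-2) + 1 ≤ Wf r k' := by
          have := hW2 (k'-2)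
          have e2 : k'-2+2 = k' := by omega
          rwa [e2] at this
        constructor
        · linarith [hWpos (k'+1), hWnn jN, hWmono k' (k'+1) (by omega)]
        · linarith [hWnn jN]
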